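/- Let ω ∈ ℝ \ {0} and let W : ℝ → ℝ be continuous with ∫_ℝ |W(s)| ds < ∞. Define η⁽⁰⁾(s) = e^{iωs} and η⁽ᵏ⁺¹⁾(s) = −∫_{−∞}^s (1/ω)·sin(ω(s−σ))·W(σ)·η⁽ᵏ⁾(σ) dσ. Then for every s ∈ ℝ the series Σ_{k=0}^∞ η⁽ᵏ⁾(s) converges absolutely, and its sum η(s) satisfies |η(s)| ≤ exp( |ω|^{−1} ∫_ℝ |W(σ)| dσ ); in particular |η(s)| ≤ 1 + O(1/|ω|) uniformly in s as |ω| → ∞. -/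

import Mathlib

open Set Filter MeasureTheory Topology

/-- The perturbation series `Σ η⁽ᵏ⁾(s)` for the Jost solution of
`η'' + ω²η = Wη` converges absolutely for every `s` (when `ω ≠ 0`), and its sum is
bounded by `exp(|ω|⁻¹ ∫|W|)`; in particular the sum is bounded by `1 + O(1/|ω|)`
uniformly in `s` as `|ω| → ∞`. -/
theorem jost_series_bound
    (W : ℝ → ℝ) (hWc : Continuous W) (hWi : Integrable W)
    (η : ℝ → ℕ → ℝ → ℂ)
    (h0 : ∀ ω : ℝ, ∀ s : ℝ, η ω 0 s = Complex.exp (Complex.I * ω * s))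
    (hrec : ∀ ω : ℝ, ∀ k : ℕ, ∀ s : ℝ, η ω (k + 1) s
      = -∫ σ in Iic s, ((1 / ω * Real.sin (ω * (s - σ)) * W σ : ℝ) : ℂ) * η ω k σ) :
    (∀ ω : ℝ, ω ≠ 0 → ∀ s : ℝ, Summable (fun k => ‖η ω k s‖) ∧
      ‖∑' k, η ω k s‖ ≤ Real.exp (|ω|⁻¹ * ∫ σ, |W σ|)) ∧
    ∃ C > 0, ∃ Ω > 0, ∀ ω : ℝ, Ω ≤ |ω| → ∀ s : ℝ,
      ‖∑' k, η ω k s‖ ≤ 1 + C / |ω| := by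
  classical
  set A := ∫ σ, |W σ| with hAdef
  have hWabs : Integrable (fun σ => |W σ|) := hWi.abs
  have hA0 : 0 ≤ A := integral_nonneg fun _ => abs_nonneg _
  set F : ℝ → ℝ := fun t => ∫ σ in Iic t, |W σ| with hFdef
  have hWint : ∀ s : ℝ, IntegrableOn (fun σ => |W σ|) (Iic s) := fun s => hWabs.integrableOn
  have hF0 : ∀ t, 0 ≤ F t := fun t => setIntegral_nonneg measurableSet_Iic fun _ _ => abs_nonneg _
  have hFA : ∀ t, F t ≤ A := fun t =>
    setIntegral_le_integral hWabs (Eventually.of_forall fun _ => abs_nonneg _)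
  have hFmono : Monotone F := fun a b hab =>
    setIntegral_mono_set (hWint b) (Eventually.of_forall fun _ => abs_nonneg _)
      (HasSubset.Subset.eventuallyLE (Iic_subset_Iic.2 hab))
  have hFsub : ∀ a b : ℝ, F b - F a = ∫ x in a..b, |W x| := fun a b =>
    intervalIntegral.integral_Iic_sub_Iic (hWint a) (hWint b)
  have hFderiv : ∀ t, HasDerivAt F (|W t|) t := by
    intro t
    have h1 : HasDerivAt (fun u => ∫ x in (0:ℝ)..u, |W x|) (|W t|) t :=
      intervalIntegral.integral_hasDerivAt_right (hWc.abs.intervalIntegrable _ _)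
        (hWc.abs.stronglyMeasurable.stronglyMeasurableAtFilter) hWc.abs.continuousAt
    have hFeq : F = fun u => (∫ x in (0:ℝ)..u, |W x|) + F 0 :=
      funext fun u => by rw [← hFsub 0 u]; ring
    rw [hFeq]
    exact h1.add_const _
  have hFcont : Continuous F := continuous_iff_continuousAt.2 fun t => (hFderiv t).continuousAt
  have hInt : ∀ (k : ℕ) (s : ℝ), IntegrableOn (fun σ => |W σ| * F σ ^ k) (Iic s) := by
    intro k s
    have h := (hWint s).bdd_mul ((hFcont.pow k).aestronglyMeasurable.restrict)
      (c := A ^ k) (ae_of_all _ fun σ => by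
        rw [Real.norm_eq_abs, Pi.pow_apply, abs_of_nonneg (pow_nonneg (hF0 σ) k)]
        exact pow_le_pow_left₀ (hF0 σ) (hFA σ) k)
    exact h.congr (Eventually.of_forall fun σ => mul_comm _ _)
  have hF0lim : Tendsto F atBot (𝓝 0) := by
    have h1 : Tendsto (fun a : ℝ => ∫ x in a..(0:ℝ), |W x|) atBot (𝓝 (F 0)) :=
      intervalIntegral_tendsto_integral_Iic 0 (hWint 0) tendsto_id
    have hFeq : F = fun a => F 0 - ∫ x in a..(0:ℝ), |W x| :=
      funext fun a => by rw [← hFsub a 0]; ring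
    rw [hFeq]
    simpa using (tendsto_const_nhds (x := F 0)).sub h1
  have keylem : ∀ (k : ℕ) (s : ℝ),
      (∫ σ in Iic s, |W σ| * F σ ^ k) ≤ F s ^ (k + 1) / (k + 1) := by
    intro k s
    have hev : ∀ᶠ a in atBot, (∫ σ in Iic s, |W σ| * F σ ^ k)
        ≤ F a ^ (k + 1) + F s ^ (k + 1) / (k + 1) := by
      filter_upwards [eventually_le_atBot s] with a ha
      have hsplit : (∫ σ in Iic s, |W σ| * F σ ^ k)
          = (∫ σ in Iic a, |W σ| * F σ ^ k) + ∫ σ in a..s, |W σ| * F σ ^ k := by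
        have h := intervalIntegral.integral_Iic_sub_Iic (hInt k a) (hInt k s)
        linarith
      have h1 : (∫ σ in Iic a, |W σ| * F σ ^ k) ≤ F a ^ (k + 1) := by
        calc (∫ σ in Iic a, |W σ| * F σ ^ k) ≤ ∫ σ in Iic a, |W σ| * F a ^ k := by
              refine setIntegral_mono_on (hInt k a) ((hWint a).mul_const _)
                measurableSet_Iic fun σ hσ => ?_
              exact mul_le_mul_of_nonneg_left
                (pow_le_pow_left₀ (hF0 σ) (hFmono hσ) k) (abs_nonneg _)
          _ = F a * F a ^ k := by rw [integral_mul_const]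
          _ = F a ^ (k + 1) := by ring
      have h2 : (∫ σ in a..s, |W σ| * F σ ^ k)
          = (F s ^ (k + 1) - F a ^ (k + 1)) / (k + 1) := by
        have hd : ∀ t ∈ uIcc a s,
            HasDerivAt (fun u => F u ^ (k + 1) / (k + 1)) (|W t| * F t ^ k) t := by
          intro t _
          have h' := ((hFderiv t).pow (k + 1)).div_const ((k : ℝ) + 1)
          refine h'.congr_deriv ?_
          have hk : (0:ℝ) < (k:ℝ) + 1 := by positivity
          push_cast
          field_simp
        rw [intervalIntegral.integral_eq_sub_of_hasDerivAt hd
          ((hWc.abs.mul (hFcont.pow k)).intervalIntegrable _ _)]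
        ring
      have h3 : 0 ≤ F a ^ (k + 1) := pow_nonneg (hF0 a) _
      have h4 : 0 ≤ F a ^ (k + 1) / (k + 1) := by positivity
      rw [hsplit, h2, sub_div]
      linarith
    have htend : Tendsto (fun a => F a ^ (k + 1) + F s ^ (k + 1) / (k + 1)) atBot
        (𝓝 (F s ^ (k + 1) / (k + 1))) := by
      have := (hF0lim.pow (k + 1)).add (tendsto_const_nhds (x := F s ^ (k + 1) / (k + 1)))
      simpa using this
    exact ge_of_tendsto htend hev
  have hbound : ∀ ω : ℝ, ω ≠ 0 → ∀ (k : ℕ) (s : ℝ),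
      ‖η ω k s‖ ≤ |ω|⁻¹ ^ k * F s ^ k / k.factorial := by
    intro ω hω k
    induction k with
    | zero =>
      intro s
      rw [h0]
      simp [Complex.norm_exp, Complex.mul_re]
    | succ k ih =>
      intro s
      rw [hrec, norm_neg]
      have hg : Integrable
          (fun σ => |ω|⁻¹ * (|W σ| * F σ ^ k) * (|ω|⁻¹ ^ k / k.factorial))
          (volume.restrict (Iic s)) := ((hInt k s).const_mul _).mul_const _
      have hstep : ‖∫ σ in Iic s, ((1 / ω * Real.sin (ω * (s - σ)) * W σ : ℝ) : ℂ) * η ω k σ‖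
          ≤ ∫ σ in Iic s, |ω|⁻¹ * (|W σ| * F σ ^ k) * (|ω|⁻¹ ^ k / k.factorial) := by
        refine norm_integral_le_of_norm_le hg (Eventually.of_forall fun σ => ?_)
        rw [norm_mul, Complex.norm_real, Real.norm_eq_abs]
        have h1 : |1 / ω * Real.sin (ω * (s - σ)) * W σ| ≤ |ω|⁻¹ * |W σ| := by
          rw [abs_mul, abs_mul, abs_div, abs_one, one_div]
          have hs1 : |Real.sin (ω * (s - σ))| ≤ 1 := Real.abs_sin_le_one _
          have : |ω|⁻¹ * |Real.sin (ω * (s - σ))| ≤ |ω|⁻¹ * 1 :=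
            mul_le_mul_of_nonneg_left hs1 (by positivity)
          nlinarith [abs_nonneg (W σ), abs_nonneg ω]
        calc |1 / ω * Real.sin (ω * (s - σ)) * W σ| * ‖η ω k σ‖
            ≤ (|ω|⁻¹ * |W σ|) * (|ω|⁻¹ ^ k * F σ ^ k / k.factorial) := by
              refine mul_le_mul h1 (ih σ) (norm_nonneg _) (by positivity)
          _ = |ω|⁻¹ * (|W σ| * F σ ^ k) * (|ω|⁻¹ ^ k / k.factorial) := by ring
      refine hstep.trans ?_
      have heq : (∫ σ in Iic s, |ω|⁻¹ * (|W σ| * F σ ^ k) * (|ω|⁻¹ ^ k / k.factorial))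
          = (|ω|⁻¹ * (|ω|⁻¹ ^ k / k.factorial)) * ∫ σ in Iic s, |W σ| * F σ ^ k := by
        rw [integral_mul_const, integral_const_mul]
        ring
      rw [heq]
      have hkey := keylem k s
      have hc : (0:ℝ) ≤ |ω|⁻¹ * (|ω|⁻¹ ^ k / k.factorial) := by positivity
      calc (|ω|⁻¹ * (|ω|⁻¹ ^ k / k.factorial)) * ∫ σ in Iic s, |W σ| * F σ ^ k
          ≤ (|ω|⁻¹ * (|ω|⁻¹ ^ k / k.factorial)) * (F s ^ (k + 1) / (k + 1)) :=
            mul_le_mul_of_nonneg_left hkey hc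
        _ = |ω|⁻¹ ^ (k + 1) * F s ^ (k + 1) / (k + 1).factorial := by
            rw [Nat.factorial_succ]
            have hfk : (0:ℝ) < k.factorial := by positivity
            push_cast
            field_simp
            try ring
            rw [mul_inv_cancel₀ (abs_ne_zero.mpr hω), one_mul]
            try tauto
  have main : ∀ ω : ℝ, ω ≠ 0 → ∀ s : ℝ, Summable (fun k => ‖η ω k s‖) ∧
      ‖∑' k, η ω k s‖ ≤ Real.exp (|ω|⁻¹ * A) := by
    intro ω hω s
    have hsum : ∀ k : ℕ, ‖η ω k s‖ ≤ (|ω|⁻¹ * A) ^ k / k.factorial := by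
      intro k
      refine (hbound ω hω k s).trans ?_
      rw [mul_pow]
      have hFsk : F s ^ k ≤ A ^ k := pow_le_pow_left₀ (hF0 s) (hFA s) k
      have hfk : (0:ℝ) < k.factorial := by positivity
      have h' : |ω|⁻¹ ^ k * F s ^ k ≤ |ω|⁻¹ ^ k * A ^ k :=
        mul_le_mul_of_nonneg_left hFsk (by positivity)
      exact div_le_div_of_nonneg_right h' hfk.le
    have hSexp : Summable (fun k : ℕ => (|ω|⁻¹ * A) ^ k / k.factorial) :=
      Real.summable_pow_div_factorial _
    have hS : Summable (fun k => ‖η ω k s‖) :=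
      Summable.of_nonneg_of_le (fun k => norm_nonneg _) hsum hSexp
    refine ⟨hS, ?_⟩
    calc ‖∑' k, η ω k s‖ ≤ ∑' k, ‖η ω k s‖ := norm_tsum_le_tsum_norm hS
      _ ≤ ∑' k : ℕ, (|ω|⁻¹ * A) ^ k / k.factorial := Summable.tsum_le_tsum hsum hS hSexp
      _ = Real.exp (|ω|⁻¹ * A) := by
          rw [Real.exp_eq_exp_ℝ, NormedSpace.exp_eq_tsum_div]
  refine ⟨main, A * Real.exp A + 1, by positivity, 1, one_pos, fun ω hω s => ?_⟩
  have hω0 : ω ≠ 0 := by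
    intro h
    rw [h, abs_zero] at hω
    linarith
  have h1 := (main ω hω0 s).2
  have hωpos : (0:ℝ) < |ω| := lt_of_lt_of_le one_pos hω
  have hinv1 : |ω|⁻¹ ≤ 1 := by
    rw [inv_le_one_iff₀]
    right; exact hω
  have hx0 : 0 ≤ |ω|⁻¹ * A := by positivity
  have hxA : |ω|⁻¹ * A ≤ A := by nlinarith
  set x := |ω|⁻¹ * A with hxdef
  have hprod : Real.exp (-x) * Real.exp x = 1 := by
    rw [← Real.exp_add]; simp
  have hexp_le : Real.exp x ≤ 1 + x * Real.exp x := by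
    nlinarith [Real.add_one_le_exp (-x), Real.exp_pos x, Real.exp_pos (-x)]
  have hmonoexp : Real.exp x ≤ Real.exp A := Real.exp_le_exp.2 hxA
  have h2 : x * Real.exp x ≤ |ω|⁻¹ * (A * Real.exp A) := by
    have : x * Real.exp x ≤ x * Real.exp A :=
      mul_le_mul_of_nonneg_left hmonoexp hx0
    calc x * Real.exp x ≤ x * Real.exp A := this
      _ = |ω|⁻¹ * (A * Real.exp A) := by rw [hxdef]; ring
  have h3 : |ω|⁻¹ * (A * Real.exp A) ≤ (A * Real.exp A + 1) / |ω| := by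
    rw [div_eq_inv_mul]
    have := Real.exp_pos A
    nlinarith [inv_pos.2 hωpos]
  calc ‖∑' k, η ω k s‖ ≤ Real.exp x := h1
    _ ≤ 1 + x * Real.exp x := hexp_le
    _ ≤ 1 + (A * Real.exp A + 1) / |ω| := by linarith
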